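/- For any integrable real random variable X with mean μ and standard deviation σ, and any β ∈ ℝ, the expectation E[(X − β)⁺] is at most ((μ − β) + √((μ − β)² + σ²)) / 2, and this bound is the worst-case value of E[(X − β)⁺] over all distributions with mean μ and variance σ². -/
import Mathlib
open MeasureTheory

lemma integrable_dirac'' {f : ℝ → ℝ} (hf : Measurable f) (a : ℝ) :
    Integrable f (Measure.dirac a) := by
  refine ⟨hf.aestronglyMeasurable, ?_⟩
  rw [HasFiniteIntegral, lintegral_dirac]
  exact ENNReal.coe_lt_top

lemma integrable_two_point (p : ℝ) (c d : ℝ) {f : ℝ → ℝ} (hf : Measurable f) :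
    Integrable f ((ENNReal.ofReal p) • Measure.dirac c + (ENNReal.ofReal (1-p)) • Measure.dirac d) :=
  ((integrable_dirac'' hf c).smul_measure ENNReal.ofReal_ne_top).add_measure
    ((integrable_dirac'' hf d).smul_measure ENNReal.ofReal_ne_top)

lemma integral_two_point (p : ℝ) (hp0 : 0 ≤ p) (hp1 : p ≤ 1) (c d : ℝ) {f : ℝ → ℝ}
    (hf : Measurable f) :
    ∫ x, f x ∂((ENNReal.ofReal p) • Measure.dirac c + (ENNReal.ofReal (1-p)) • Measure.dirac d)
      = p * f c + (1-p) * f d := by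
  rw [integral_add_measure ((integrable_dirac'' hf c).smul_measure ENNReal.ofReal_ne_top)
      ((integrable_dirac'' hf d).smul_measure ENNReal.ofReal_ne_top),
    integral_smul_measure, integral_smul_measure, integral_dirac, integral_dirac,
    ENNReal.toReal_ofReal hp0, ENNReal.toReal_ofReal (by linarith)]
  simp [smul_eq_mul]
lemma integral_quad (P : Measure ℝ) [IsProbabilityMeasure P]
    (hX : Integrable (fun x : ℝ => x) P) (hX2 : Integrable (fun x : ℝ => x ^ 2) P) (b c : ℝ) :
    ∫ x, (x ^ 2 + b * x + c) ∂P = (∫ x, x ^ 2 ∂P) + b * (∫ x, x ∂P) + c := by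
  have hI : Integrable (fun x : ℝ => x ^ 2 + b * x) P := hX2.add (hX.const_mul b)
  rw [integral_add hI (integrable_const c), integral_add hX2 (hX.const_mul b),
    integral_const_mul, integral_const]
  simp

lemma upper_bound (μ σ β : ℝ) (hσ : 0 < σ) (P : Measure ℝ) (hP : IsProbabilityMeasure P)
    (hX : Integrable (fun x : ℝ => x) P) (hX2 : Integrable (fun x : ℝ => x ^ 2) P)
    (hm : (∫ x, x ∂P) = μ) (hv : (∫ x, (x - μ) ^ 2 ∂P) = σ ^ 2) :
    ∫ x, max (x - β) 0 ∂P ≤ ((μ - β) + Real.sqrt ((μ - β) ^ 2 + σ ^ 2)) / 2 := by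
  set a := Real.sqrt ((μ - β) ^ 2 + σ ^ 2) with ha_def
  have ha2 : a ^ 2 = (μ - β) ^ 2 + σ ^ 2 := Real.sq_sqrt (by positivity)
  have ha : 0 < a := Real.sqrt_pos.2 (by positivity)
  -- second moment
  have hv' : (∫ x, x ^ 2 ∂P) = σ ^ 2 + μ ^ 2 := by
    have hfe : (fun x : ℝ => (x - μ) ^ 2) = fun x => x ^ 2 + (-2 * μ) * x + μ ^ 2 := by
      funext x; ring
    rw [hfe, integral_quad P hX hX2, hm] at hv
    linarith
  have hIq : Integrable (fun x : ℝ => (x - β + a) ^ 2 / (4 * a)) P := by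
    have hfe : (fun x : ℝ => (x - β + a) ^ 2 / (4 * a))
        = fun x => (x ^ 2 + (2 * (a - β)) * x + (a - β) ^ 2) / (4 * a) := by
      funext x; ring
    rw [hfe]
    exact ((hX2.add (hX.const_mul _)).add (integrable_const _)).div_const _
  have hImax : Integrable (fun x : ℝ => max (x - β) 0) P :=
    (hX.sub (integrable_const β)).pos_part
  have hpt : ∀ x : ℝ, max (x - β) 0 ≤ (x - β + a) ^ 2 / (4 * a) := by
    intro x
    apply max_le
    · rw [le_div_iff₀ (by linarith)]
      nlinarith [sq_nonneg (x - β - a)]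
    · positivity
  have hle : ∫ x, max (x - β) 0 ∂P ≤ ∫ x, (x - β + a) ^ 2 / (4 * a) ∂P :=
    integral_mono hImax hIq hpt
  have hval : ∫ x, (x - β + a) ^ 2 / (4 * a) ∂P = ((μ - β) + a) / 2 := by
    have hfe : (fun x : ℝ => (x - β + a) ^ 2 / (4 * a))
        = fun x => (x ^ 2 + (2 * (a - β)) * x + (a - β) ^ 2) * (4 * a)⁻¹ := by
      funext x; ring
    rw [hfe, integral_mul_const, integral_quad P hX hX2, hm, hv']
    have hnum : σ ^ 2 + μ ^ 2 + 2 * (a - β) * μ + (a - β) ^ 2 = 2 * a * ((μ - β) + a) := by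
      linear_combination (-1 : ℝ) * ha2
    rw [hnum]
    field_simp
    ring
  linarith [hval ▸ hle]

lemma attain_lemma (μ σ β : ℝ) (hσ : 0 < σ) :
    ∃ P : Measure ℝ, IsProbabilityMeasure P ∧
        Integrable (fun x : ℝ => x) P ∧ Integrable (fun x : ℝ => x ^ 2) P ∧
        (∫ x, x ∂P) = μ ∧ (∫ x, (x - μ) ^ 2 ∂P) = σ ^ 2 ∧
        ((μ - β) + Real.sqrt ((μ - β) ^ 2 + σ ^ 2)) / 2 = ∫ x, max (x - β) 0 ∂P := by
  set m := μ - β with hm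
  set a := Real.sqrt (m ^ 2 + σ ^ 2) with ha_def
  have ha2 : a ^ 2 = m ^ 2 + σ ^ 2 := Real.sq_sqrt (by positivity)
  have ha : 0 < a := Real.sqrt_pos.2 (by positivity)
  have hma1 : m < a := by nlinarith
  have hma2 : -a < m := by nlinarith
  set p := (a - m) / (2 * a) with hp_def
  have hp0 : 0 ≤ p := div_nonneg (by linarith) (by linarith)
  have hp1 : p ≤ 1 := by rw [hp_def, div_le_one (by linarith)]; linarith
  refine ⟨(ENNReal.ofReal p) • Measure.dirac (β - a) + (ENNReal.ofReal (1-p)) • Measure.dirac (β + a),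
    ?_, integrable_two_point _ _ _ (f := fun x : ℝ => x) measurable_id,
    integrable_two_point _ _ _ (measurable_id.pow_const 2), ?_, ?_, ?_⟩
  · constructor
    simp only [Measure.add_apply, Measure.smul_apply, smul_eq_mul, measure_univ, mul_one]
    rw [← ENNReal.ofReal_add hp0 (by linarith)]
    norm_num
  · rw [integral_two_point p hp0 hp1 _ _ (f := fun x : ℝ => x) measurable_id]
    have hμ : μ = β + m := by rw [hm]; ring
    rw [hμ, hp_def]
    field_simp
    ring
  · rw [integral_two_point p hp0 hp1 _ _ (by measurability : Measurable fun x : ℝ => (x - μ) ^ 2)]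
    have : μ = β + m := by rw [hm]; ring
    rw [this, hp_def]
    field_simp
    linear_combination (2 * a) * ha2
  · rw [integral_two_point p hp0 hp1 _ _ (f := fun x : ℝ => max (x - β) 0) (by measurability)]
    have h1 : max (β - a - β) 0 = 0 := by rw [max_eq_right]; linarith
    have h2 : max (β + a - β) 0 = a := by rw [max_eq_left]; linarith; linarith
    rw [h1, h2, hp_def]
    field_simp
    ring

theorem stmt7 (μ σ β : ℝ) (hσ : 0 < σ) :
    (∀ P : Measure ℝ, IsProbabilityMeasure P →
      Integrable (fun x : ℝ => x) P → Integrable (fun x : ℝ => x ^ 2) P →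
      (∫ x, x ∂P) = μ → (∫ x, (x - μ) ^ 2 ∂P) = σ ^ 2 →
      ∫ x, max (x - β) 0 ∂P ≤ ((μ - β) + Real.sqrt ((μ - β) ^ 2 + σ ^ 2)) / 2) ∧
    sSup {y : ℝ | ∃ P : Measure ℝ, IsProbabilityMeasure P ∧
        Integrable (fun x : ℝ => x) P ∧ Integrable (fun x : ℝ => x ^ 2) P ∧
        (∫ x, x ∂P) = μ ∧ (∫ x, (x - μ) ^ 2 ∂P) = σ ^ 2 ∧
        y = ∫ x, max (x - β) 0 ∂P}
      = ((μ - β) + Real.sqrt ((μ - β) ^ 2 + σ ^ 2)) / 2 := by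
  refine ⟨fun P hP hX hX2 hm hv => upper_bound μ σ β hσ P hP hX hX2 hm hv, ?_⟩
  obtain ⟨P₀, h1, h2, h3, h4, h5, h6⟩ := attain_lemma μ σ β hσ
  have hmem : ((μ - β) + Real.sqrt ((μ - β) ^ 2 + σ ^ 2)) / 2 ∈
      {y : ℝ | ∃ P : Measure ℝ, IsProbabilityMeasure P ∧
        Integrable (fun x : ℝ => x) P ∧ Integrable (fun x : ℝ => x ^ 2) P ∧
        (∫ x, x ∂P) = μ ∧ (∫ x, (x - μ) ^ 2 ∂P) = σ ^ 2 ∧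
        y = ∫ x, max (x - β) 0 ∂P} := ⟨P₀, h1, h2, h3, h4, h5, h6⟩
  have hub : ∀ y ∈ {y : ℝ | ∃ P : Measure ℝ, IsProbabilityMeasure P ∧
        Integrable (fun x : ℝ => x) P ∧ Integrable (fun x : ℝ => x ^ 2) P ∧
        (∫ x, x ∂P) = μ ∧ (∫ x, (x - μ) ^ 2 ∂P) = σ ^ 2 ∧
        y = ∫ x, max (x - β) 0 ∂P},
      y ≤ ((μ - β) + Real.sqrt ((μ - β) ^ 2 + σ ^ 2)) / 2 := by
    rintro y ⟨P, hP, hX, hX2, hm, hv, rfl⟩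
    exact upper_bound μ σ β hσ P hP hX hX2 hm hv
  exact le_antisymm (csSup_le ⟨_, hmem⟩ hub)
    (le_csSup ⟨((μ - β) + Real.sqrt ((μ - β) ^ 2 + σ ^ 2)) / 2, hub⟩ hmem)
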